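/- Let G be a Lie group acting smoothly on a smooth boundaryless Hausdorff manifold M, let X be a smooth (C^∞) G-equivariant vector field on M with a relative equilibrium at m ∈ M with velocity ξ ∈ 𝔤 (i.e., X(m) = T ev_m(ξ)), and let γ : ℝ → G be a smooth group homomorphism with derivative ξ at 0 (γ plays the role of τ ↦ exp(τξ)). Then for every τ ∈ ℝ, the element γ(τ) lies in the normalizer in G of the stabilizer subgroup G_m of m. -/

import Mathlib

open scoped Manifold

/-- Let `G` be a Lie group acting smoothly on a smooth boundaryless Hausdorff
manifold `M`, let `X` be a smooth `G`-equivariant vector field on `M` with a relative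
equilibrium at `m` with velocity `ξ ∈ 𝔤` (`X m = T ev_m ξ`), and let `γ : ℝ → G` be a smooth
group homomorphism with derivative `ξ` at `0` (playing the role of `τ ↦ exp (τ ξ)`).  Then for
every `τ`, the element `γ τ` lies in the normalizer in `G` of the stabilizer of `m`. -/
theorem one_parameter_subgroup_mem_normalizer_of_stabilizer
    {EG : Type*} [NormedAddCommGroup EG] [NormedSpace ℝ EG]
    {HG : Type*} [TopologicalSpace HG] {IG : ModelWithCorners ℝ EG HG}
    {G : Type*} [TopologicalSpace G] [ChartedSpace HG G] [Group G]
    [IsManifold IG (⊤ : ℕ∞) G] [LieGroup IG (⊤ : ℕ∞) G]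
    {EM : Type*} [NormedAddCommGroup EM] [NormedSpace ℝ EM]
    {HM : Type*} [TopologicalSpace HM] {IM : ModelWithCorners ℝ EM HM}
    {M : Type*} [TopologicalSpace M] [ChartedSpace HM M] [IsManifold IM (⊤ : ℕ∞) M]
    [T2Space M] [BoundarylessManifold IM M]
    [MulAction G M]
    (hact : ContMDiff (IG.prod IM) IM (⊤ : ℕ∞) fun p : G × M => p.1 • p.2)
    (X : (x : M) → TangentSpace IM x)
    (hX_smooth : ContMDiff IM IM.tangent (⊤ : ℕ∞)
      fun x : M => (⟨x, X x⟩ : TangentBundle IM M))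
    (hX_equiv : ∀ (g : G) (p : M), X (g • p) = mfderiv IM IM (fun q : M => g • q) p (X p))
    (m : M) (ξ : TangentSpace IG (1 : G))
    (hrel : X m = mfderiv IG IM (fun g : G => g • m) (1 : G) ξ)
    (γ : ℝ → G)
    (hγ_smooth : ContMDiff 𝓘(ℝ, ℝ) IG (⊤ : ℕ∞) γ)
    (hγ_one : γ 0 = 1)
    (hγ_hom : ∀ s t : ℝ, γ (s + t) = γ s * γ t)
    (hγ_deriv : mfderiv 𝓘(ℝ, ℝ) IG γ 0 (1 : ℝ) = ξ) :
    ∀ τ : ℝ, γ τ ∈ Subgroup.normalizer (MulAction.stabilizer G m : Set G) := by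
  -- smoothness of the evaluation map `g ↦ g • m`
  have smooth_ev : ContMDiff IG IM (⊤ : ℕ∞) (fun g : G => g • m) :=
    hact.comp (contMDiff_id.prodMk contMDiff_const)
  -- smoothness of translations `p ↦ g • p`
  have smooth_L : ∀ g : G, ContMDiff IM IM (⊤ : ℕ∞) (fun p : M => g • p) := fun g =>
    hact.comp (contMDiff_const.prodMk contMDiff_id)
  set c : ℝ → M := fun τ => γ τ • m with hc_def
  have smooth_c : ContMDiff 𝓘(ℝ, ℝ) IM (⊤ : ℕ∞) c := smooth_ev.comp hγ_smooth
  have hc0 : c 0 = m := by simp [hc_def, hγ_one]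
  -- the derivative of `c` at `0` is `X m`
  have hderiv0 : mfderiv 𝓘(ℝ, ℝ) IM c 0 (1 : ℝ) = X m := by
    have hcomp : mfderiv 𝓘(ℝ, ℝ) IM c 0 =
        (mfderiv IG IM (fun g : G => g • m) (γ 0)).comp (mfderiv 𝓘(ℝ, ℝ) IG γ 0) :=
      mfderiv_comp 0 (smooth_ev.mdifferentiableAt (by simp)) (hγ_smooth.mdifferentiableAt (by simp))
    rw [hcomp]
    rw [hγ_one]
    show mfderiv IG IM (fun g : G => g • m) 1 (mfderiv 𝓘(ℝ, ℝ) IG γ 0 (1 : ℝ)) = X m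
    rw [hγ_deriv]
    exact hrel.symm
  -- `c` is an integral curve of `X`
  have hc : IsMIntegralCurve c X := by
    intro t
    have hsub : HasMFDerivAt 𝓘(ℝ, ℝ) 𝓘(ℝ, ℝ) (fun τ : ℝ => τ - t) t
        (ContinuousLinearMap.id ℝ ℝ) := by
      have : HasFDerivAt (fun τ : ℝ => τ - t) (ContinuousLinearMap.id ℝ ℝ) t :=
        (hasFDerivAt_id t).sub_const t
      exact this.hasMFDerivAt
    have hcsub : HasMFDerivAt 𝓘(ℝ, ℝ) IM c (t - t)
        ((1 : ℝ →L[ℝ] ℝ).smulRight (X m)) := by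
      have h0 : HasMFDerivAt 𝓘(ℝ, ℝ) IM c 0 ((1 : ℝ →L[ℝ] ℝ).smulRight (X m)) := by
        have hd := (smooth_c.mdifferentiableAt (by simp) : MDifferentiableAt 𝓘(ℝ, ℝ) IM c 0)
        have := hd.hasMFDerivAt
        refine this.congr_mfderiv (Eq.symm ?_)
        symm
        apply ContinuousLinearMap.ext_ring
        exact hderiv0.trans (one_smul ℝ (X m)).symm
      rw [sub_self]
      exact h0
    have hcomp1 : HasMFDerivAt 𝓘(ℝ, ℝ) IM (c ∘ fun τ : ℝ => τ - t) t
        (((1 : ℝ →L[ℝ] ℝ).smulRight (X m)).comp (ContinuousLinearMap.id ℝ ℝ)) :=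
      HasMFDerivAt.comp (f := fun τ : ℝ => τ - t) t hcsub hsub
    have hLd : MDifferentiableAt IM IM (fun p : M => γ t • p) m :=
      (smooth_L (γ t)).mdifferentiableAt (by simp)
    have hcm : (c ∘ fun τ : ℝ => τ - t) t = m := by simp [hc_def, hγ_one]
    have hL : HasMFDerivAt IM IM (fun p : M => γ t • p) ((c ∘ fun τ : ℝ => τ - t) t)
        (mfderiv IM IM (fun p : M => γ t • p) m) := by
      rw [hcm]; exact hLd.hasMFDerivAt
    have hcomp2 := hL.comp t hcomp1
    have hfun : (fun p : M => γ t • p) ∘ (c ∘ fun τ : ℝ => τ - t) = c := by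
      funext τ
      show γ t • (γ (τ - t) • m) = γ τ • m
      conv_rhs => rw [show τ = t + (τ - t) by ring]
      rw [hγ_hom, mul_smul]
    rw [hfun] at hcomp2
    refine hcomp2.congr_mfderiv (Eq.symm ?_)
    apply ContinuousLinearMap.ext_ring
    show ((1 : ℝ →L[ℝ] ℝ).smulRight (X (c t))) (1 : ℝ) =
      (mfderiv IM IM (fun p : M => γ t • p) m)
        (((1 : ℝ →L[ℝ] ℝ).smulRight (X m)) ((ContinuousLinearMap.id ℝ ℝ) (1 : ℝ)))
    simp only [ContinuousLinearMap.smulRight_apply, ContinuousLinearMap.one_apply, one_smul,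
      ContinuousLinearMap.id_apply]
    exact hX_equiv (γ t) m
  -- key fact: for `h` in the stabilizer, `h • (γ τ • m) = γ τ • m`
  have key : ∀ h ∈ MulAction.stabilizer G m, ∀ τ : ℝ, h • (γ τ • m) = γ τ • m := by
    intro h hh τ
    have hch : IsMIntegralCurve (fun τ => h • c τ) X := by
      intro t
      have hL : HasMFDerivAt IM IM (fun p : M => h • p) (c t)
          (mfderiv IM IM (fun p : M => h • p) (c t)) :=
        ((smooth_L h).mdifferentiableAt (by simp)).hasMFDerivAt
      have := hL.comp t (hc t)
      refine this.congr_mfderiv (Eq.symm ?_)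
      apply ContinuousLinearMap.ext_ring
      show ((1 : ℝ →L[ℝ] ℝ).smulRight (X (h • c t))) (1 : ℝ) =
        (mfderiv IM IM (fun p : M => h • p) (c t))
          (((1 : ℝ →L[ℝ] ℝ).smulRight (X (c t))) (1 : ℝ))
      simp only [ContinuousLinearMap.smulRight_apply, ContinuousLinearMap.one_apply, one_smul]
      exact hX_equiv h (c t)
    have heq0 : (fun τ => h • c τ) 0 = c 0 := by
      simp only [hc0]
      exact hh
    have := isMIntegralCurve_Ioo_eq_of_contMDiff_boundaryless (t₀ := 0)
      (hX_smooth.of_le (by simp)) hch hc heq0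
    exact congrFun this τ
  -- γ is a group hom: inverse
  have hγ_inv : ∀ τ : ℝ, (γ τ)⁻¹ = γ (-τ) := fun τ =>
    inv_eq_of_mul_eq_one_right (by rw [← hγ_hom]; simp [hγ_one])
  intro τ
  rw [Subgroup.mem_normalizer_iff]
  intro h
  constructor
  · intro hh
    rw [MulAction.mem_stabilizer_iff]
    have hk := key h hh (-τ)
    calc (γ τ * h * (γ τ)⁻¹) • m = γ τ • (h • ((γ τ)⁻¹ • m)) := by
          rw [mul_smul, mul_smul]
      _ = γ τ • (h • (γ (-τ) • m)) := by rw [hγ_inv]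
      _ = γ τ • (γ (-τ) • m) := by rw [hk]
      _ = (γ τ * γ (-τ)) • m := by rw [mul_smul]
      _ = m := by rw [← hγ_hom]; simp [hγ_one]
  · intro hh
    have hk := key _ hh τ
    rw [MulAction.mem_stabilizer_iff]
    have h2 : γ τ • (h • m) = γ τ • m := by
      calc γ τ • (h • m) = (γ τ * h) • m := by rw [mul_smul]
        _ = (γ τ * h * (γ τ)⁻¹ * γ τ) • m := by rw [inv_mul_cancel_right]
        _ = (γ τ * h * (γ τ)⁻¹) • (γ τ • m) := by rw [mul_smul]
        _ = γ τ • m := hk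
    exact smul_left_cancel _ h2
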